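/- Let B̂ be a global minimizer of L₁ over ℝ^{p×q} and fix an index pair (j,k) with x_j ≠ 0. Suppose that every group g ∈ 𝒢 containing (j,k) satisfies ‖B̂_g‖₂ > 0 (the paper states this condition equivalently as √(Σ_{(j',k')∈g} ((|S_{j'k'}(B̂)|/n − λ₁ w_{j'})₊)²) > λ_g v_g for every such group). Then β̂_jk = sgn(S_jk(B̂)) · (|S_jk(B̂)| − n λ₁ w_j)₊ / ( ‖x_j‖₂² + n · Σ_{g ∈ 𝒢 : (j,k) ∈ g} λ_g v_g / ‖B̂_g‖₂ ). -/

import Mathlib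

open Finset

section Aux

open Filter Set in
lemma oneDim_min (h : ℝ → ℝ) (d lam t₀ : ℝ) (hd : HasDerivAt h d t₀) (_hlam : 0 ≤ lam)
    (hmin : ∀ t, h t₀ + lam * |t₀| ≤ h t + lam * |t|) :
    (t₀ ≠ 0 → d + lam * Real.sign t₀ = 0) ∧ (t₀ = 0 → |d| ≤ lam) := by
  constructor
  · intro ht
    have habs : HasDerivAt (fun t => |t|) ((SignType.sign t₀ : ℝ)) t₀ := hasDerivAt_abs ht
    have hG : HasDerivAt (fun t => h t + lam * |t|) (d + lam * (SignType.sign t₀ : ℝ)) t₀ :=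
      hd.add (habs.const_mul lam)
    have hloc : IsLocalMin (fun t => h t + lam * |t|) t₀ :=
      Filter.Eventually.of_forall hmin
    have := hloc.hasDerivAt_eq_zero hG
    have hsign : (SignType.sign t₀ : ℝ) = Real.sign t₀ := by
      rcases lt_trichotomy t₀ 0 with hlt | heq | hgt
      · simp [hlt, Real.sign_of_neg hlt]
      · exact absurd heq ht
      · simp [hgt, Real.sign_of_pos hgt]
    rw [← hsign]; exact this
  · intro ht
    subst ht
    have hslope : Tendsto (slope h 0) (nhdsWithin 0 {(0:ℝ)}ᶜ) (nhds d) :=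
      hasDerivAt_iff_tendsto_slope.mp hd
    have hpos : -lam ≤ d := by
      have h1 : Tendsto (slope h 0) (nhdsWithin 0 (Ioi 0)) (nhds d) :=
        hslope.mono_left (nhdsWithin_mono _ (fun x hx => ne_of_gt hx))
      refine ge_of_tendsto h1 ?_
      filter_upwards [self_mem_nhdsWithin] with t htmem
      have htpos : (0:ℝ) < t := htmem
      have hm := hmin t
      rw [abs_of_nonneg (le_of_lt htpos)] at hm
      simp only [abs_zero, mul_zero, add_zero] at hm
      rw [slope_def_field]
      rw [sub_zero, le_div_iff₀ htpos]
      nlinarith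
    have hneg : d ≤ lam := by
      have h1 : Tendsto (slope h 0) (nhdsWithin 0 (Iio 0)) (nhds d) :=
        hslope.mono_left (nhdsWithin_mono _ (fun x hx => ne_of_lt hx))
      refine le_of_tendsto h1 ?_
      filter_upwards [self_mem_nhdsWithin] with t htmem
      have htneg : t < (0:ℝ) := htmem
      have hm := hmin t
      rw [abs_of_nonpos (le_of_lt htneg)] at hm
      simp only [abs_zero, mul_zero, add_zero] at hm
      rw [slope_def_field]
      rw [sub_zero, div_le_iff_of_neg htneg]
      nlinarith
    exact abs_le.mpr ⟨hpos, hneg⟩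

end Aux

set_option maxHeartbeats 1000000 in
/-- closed-form expression for a nonzero coordinate of a global
minimizer of the weighted sparse group lasso objective L₁ (Model 1),
when every group containing the index `(j,k)` has positive norm. -/
theorem jointModel_beta_hat_formula
    (n p q : ℕ) (hn : 0 < n) (hp : 0 < p) (hq : 0 < q)
    (X : Matrix (Fin n) (Fin p) ℝ) (Y : Matrix (Fin n) (Fin q) ℝ)
    (lam1 : ℝ) (hlam1 : 0 ≤ lam1)
    (w : Fin p → ℝ) (hw : ∀ j, 0 ≤ w j)
    (𝒢 : Finset (Finset (Fin p × Fin q)))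
    (lamg vg : Finset (Fin p × Fin q) → ℝ)
    (hlamg : ∀ g ∈ 𝒢, 0 ≤ lamg g) (hvg : ∀ g ∈ 𝒢, 0 ≤ vg g)
    (L1 : Matrix (Fin p) (Fin q) ℝ → ℝ)
    (hL1 : ∀ B, L1 B =
      (1 / (2 * (n : ℝ))) * ∑ i, ∑ k, (Y i k - ∑ j, X i j * B j k) ^ 2
      + ∑ j, ∑ k, lam1 * w j * |B j k|
      + ∑ g ∈ 𝒢, lamg g * vg g * Real.sqrt (∑ jk ∈ g, (B jk.1 jk.2) ^ 2))
    (S : Matrix (Fin p) (Fin q) ℝ → Fin p → Fin q → ℝ)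
    (hS : ∀ B j k, S B j k =
      ∑ i, X i j * (Y i k - ∑ j', (if j' = j then 0 else X i j' * B j' k)))
    (Bhat : Matrix (Fin p) (Fin q) ℝ)
    (hmin : ∀ B, L1 Bhat ≤ L1 B)
    (j : Fin p) (k : Fin q)
    (hx : (fun i => X i j) ≠ 0)
    (hgroups : ∀ g ∈ 𝒢, (j, k) ∈ g →
      0 < Real.sqrt (∑ jk ∈ g, (Bhat jk.1 jk.2) ^ 2)) :
    Bhat j k =
      Real.sign (S Bhat j k) * max (|S Bhat j k| - (n : ℝ) * lam1 * w j) 0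
      / ((∑ i, (X i j) ^ 2)
        + (n : ℝ) * ∑ g ∈ 𝒢.filter (fun g => (j, k) ∈ g),
            lamg g * vg g / Real.sqrt (∑ jk ∈ g, (Bhat jk.1 jk.2) ^ 2)) := by
  classical
  have hn' : (0:ℝ) < (n:ℝ) := by exact_mod_cast hn
  have hnne : (n:ℝ) ≠ 0 := ne_of_gt hn'
  set t₀ := Bhat j k with ht₀def
  set a : ℝ := ∑ i, (X i j)^2 with hadef
  set b : ℝ := S Bhat j k with hbdef
  set r : Fin n → ℝ := fun i => Y i k - ∑ j', (if j' = j then 0 else X i j' * Bhat j' k)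
    with hrdef
  have hb : b = ∑ i, X i j * r i := by rw [hbdef, hS]
  set c : Finset (Fin p × Fin q) → ℝ := fun g => ∑ jk ∈ g.erase (j,k), (Bhat jk.1 jk.2)^2
    with hcdef
  set B : ℝ → Matrix (Fin p) (Fin q) ℝ :=
    fun t => fun j' k' => if j' = j ∧ k' = k then t else Bhat j' k' with hBdef
  have hBjk : ∀ t, B t j k = t := by intro t; simp [hBdef]
  have hBne : ∀ t j' k', ¬(j' = j ∧ k' = k) → B t j' k' = Bhat j' k' := by
    intro t j' k' hne; simp [hBdef, hne]
  have hB0 : B t₀ = Bhat := by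
    funext j' k'
    by_cases hc : j' = j ∧ k' = k
    · obtain ⟨h1, h2⟩ := hc; subst h1; subst h2; exact hBjk t₀
    · exact hBne t₀ j' k' hc
  -- group sums
  have hgsum : ∀ (t : ℝ) (g : Finset (Fin p × Fin q)), (j,k) ∈ g →
      ∑ jk ∈ g, (B t jk.1 jk.2)^2 = t^2 + c g := by
    intro t g hg
    rw [← Finset.add_sum_erase g _ hg]
    congr 1
    · rw [hBjk]
    · apply Finset.sum_congr rfl
      intro jk' hjk'
      have hne : jk' ≠ (j,k) := Finset.ne_of_mem_erase hjk'
      rw [hBne]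
      intro hcon
      exact hne (by rw [Prod.ext_iff]; exact ⟨hcon.1, hcon.2⟩)
  have hgsum' : ∀ (t : ℝ) (g : Finset (Fin p × Fin q)), (j,k) ∉ g →
      ∑ jk ∈ g, (B t jk.1 jk.2)^2 = ∑ jk ∈ g, (Bhat jk.1 jk.2)^2 := by
    intro t g hg
    apply Finset.sum_congr rfl
    intro jk' hjk'
    have hne : jk' ≠ (j,k) := fun h => hg (h ▸ hjk')
    rw [hBne]
    intro hcon
    exact hne (by rw [Prod.ext_iff]; exact ⟨hcon.1, hcon.2⟩)
  have hcpos : ∀ g ∈ 𝒢.filter (fun g => (j,k) ∈ g), 0 < t₀^2 + c g := by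
    intro g hg
    rw [Finset.mem_filter] at hg
    have := hgroups g hg.1 hg.2
    rw [Real.sqrt_pos] at this
    calc 0 < ∑ jk ∈ g, (Bhat jk.1 jk.2)^2 := this
      _ = t₀^2 + c g := by rw [← hB0, hgsum t₀ g hg.2]
  have hBhatg : ∀ g ∈ 𝒢.filter (fun g => (j,k) ∈ g),
      ∑ jk ∈ g, (Bhat jk.1 jk.2)^2 = t₀^2 + c g := by
    intro g hg
    rw [Finset.mem_filter] at hg
    rw [← hB0, hgsum t₀ g hg.2]
  set Sg : ℝ := ∑ g ∈ 𝒢.filter (fun g => (j,k) ∈ g),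
      lamg g * vg g / Real.sqrt (t₀^2 + c g) with hSgdef
  set lam : ℝ := lam1 * w j with hlamdef
  have hlamnn : 0 ≤ lam := mul_nonneg hlam1 (hw j)
  set h : ℝ → ℝ := fun t => (1/(2*(n:ℝ))) * (a*t^2 - 2*b*t)
      + ∑ g ∈ 𝒢.filter (fun g => (j,k) ∈ g), lamg g * vg g * Real.sqrt (t^2 + c g)
    with hhdef
  -- the expansion of L1 along the coordinate line
  set K : ℝ := (1/(2*(n:ℝ))) * ((∑ i, ∑ k' ∈ Finset.univ.erase k,
        (Y i k' - ∑ j', X i j' * Bhat j' k')^2) + ∑ i, (r i)^2)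
      + (∑ x ∈ (Finset.univ : Finset (Fin p × Fin q)).erase (j,k),
          lam1 * w x.1 * |Bhat x.1 x.2|)
      + ∑ g ∈ 𝒢.filter (fun g => ¬ (j,k) ∈ g),
          lamg g * vg g * Real.sqrt (∑ jk ∈ g, (Bhat jk.1 jk.2)^2) with hKdef
  have hLt : ∀ t, L1 (B t) = K + h t + lam * |t| := by
    intro t
    rw [hL1]
    have hpart1 : ∑ i, ∑ k', (Y i k' - ∑ j', X i j' * B t j' k')^2
        = (∑ i, ∑ k' ∈ Finset.univ.erase k, (Y i k' - ∑ j', X i j' * Bhat j' k')^2)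
          + ((∑ i, (r i)^2) - 2*b*t + a*t^2) := by
      have hcol : ∀ i, Y i k - ∑ j', X i j' * B t j' k = r i - X i j * t := by
        intro i
        have hterm : ∀ j', X i j' * B t j' k
            = (if j' = j then 0 else X i j' * Bhat j' k) + (if j' = j then X i j * t else 0) := by
          intro j'
          by_cases hj : j' = j
          · subst hj; simp [hBjk]
          · rw [hBne t j' k (fun hc => hj hc.1)]; simp [hj]
        rw [Finset.sum_congr rfl (fun j' _ => hterm j'), Finset.sum_add_distrib,
          Finset.sum_ite_eq' Finset.univ j (fun _ => X i j * t)]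
        simp only [Finset.mem_univ, if_true, hrdef]
        ring
      have hrow : ∀ i, ∑ k', (Y i k' - ∑ j', X i j' * B t j' k')^2
          = (r i - X i j * t)^2
            + ∑ k' ∈ Finset.univ.erase k, (Y i k' - ∑ j', X i j' * Bhat j' k')^2 := by
        intro i
        rw [← Finset.add_sum_erase _ _ (Finset.mem_univ k), hcol i]
        congr 1
        apply Finset.sum_congr rfl
        intro k' hk'
        have hk'ne : k' ≠ k := Finset.ne_of_mem_erase hk'
        congr 2
        apply Finset.sum_congr rfl
        intro j' _
        rw [hBne t j' k' (fun hc => hk'ne hc.2)]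
      rw [Finset.sum_congr rfl (fun i _ => hrow i), Finset.sum_add_distrib]
      have hexp : ∑ i, (r i - X i j * t)^2
          = ∑ i, ((r i)^2 - 2*(X i j * r i)*t + (X i j)^2*t^2) :=
        Finset.sum_congr rfl (fun i _ => by ring)
      rw [hexp]
      rw [Finset.sum_add_distrib, Finset.sum_sub_distrib, ← Finset.sum_mul, ← Finset.sum_mul,
        ← Finset.mul_sum, ← hb, ← hadef]
      ring
    have hpart2 : ∑ j', ∑ k', lam1 * w j' * |B t j' k'|
        = (∑ x ∈ (Finset.univ : Finset (Fin p × Fin q)).erase (j,k),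
            lam1 * w x.1 * |Bhat x.1 x.2|) + lam * |t| := by
      have h1 : ∑ j', ∑ k', lam1 * w j' * |B t j' k'|
          = ∑ x : Fin p × Fin q, lam1 * w x.1 * |B t x.1 x.2| := by
        rw [Fintype.sum_prod_type]
      rw [h1, ← Finset.add_sum_erase _ _ (Finset.mem_univ (j,k))]
      have h2 : lam1 * w (j,k).1 * |B t (j,k).1 (j,k).2| = lam * |t| := by
        simp only [hBjk t, hlamdef]
      rw [h2]
      rw [Finset.sum_congr rfl (fun x hx' => by
        have hne : x ≠ (j,k) := Finset.ne_of_mem_erase hx'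
        rw [hBne t x.1 x.2 (fun hc => hne (by rw [Prod.ext_iff]; exact ⟨hc.1, hc.2⟩))])]
      ring
    have hpart3 : ∑ g ∈ 𝒢, lamg g * vg g * Real.sqrt (∑ jk ∈ g, (B t jk.1 jk.2)^2)
        = (∑ g ∈ 𝒢.filter (fun g => (j,k) ∈ g), lamg g * vg g * Real.sqrt (t^2 + c g))
          + ∑ g ∈ 𝒢.filter (fun g => ¬ (j,k) ∈ g),
              lamg g * vg g * Real.sqrt (∑ jk ∈ g, (Bhat jk.1 jk.2)^2) := by
      rw [← Finset.sum_filter_add_sum_filter_not 𝒢 (fun g => (j,k) ∈ g)]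
      congr 1
      · apply Finset.sum_congr rfl
        intro g hg
        rw [Finset.mem_filter] at hg
        rw [hgsum t g hg.2]
      · apply Finset.sum_congr rfl
        intro g hg
        rw [Finset.mem_filter] at hg
        rw [hgsum' t g hg.2]
    rw [hpart1, hpart2, hpart3, hKdef, hhdef]
    ring
  -- the one-dimensional minimization
  have hGmin : ∀ t, h t₀ + lam * |t₀| ≤ h t + lam * |t| := by
    intro t
    have := hmin (B t)
    rw [← hB0] at this
    rw [hLt t₀, hLt t] at this
    linarith
  have hd : HasDerivAt h ((a*t₀ - b)/(n:ℝ) + t₀ * Sg) t₀ := by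
    have h1 : HasDerivAt (fun t : ℝ => (1/(2*(n:ℝ))) * (a*t^2 - 2*b*t)) ((a*t₀ - b)/(n:ℝ)) t₀ := by
      have hq1 : HasDerivAt (fun t : ℝ => a*t^2 - 2*b*t) (a*(2*t₀) - 2*b) t₀ := by
        have := ((hasDerivAt_pow 2 t₀).const_mul a).sub ((hasDerivAt_id t₀).const_mul (2*b))
        exact this.congr_deriv (by norm_num)
      have := hq1.const_mul (1/(2*(n:ℝ)))
      refine this.congr_deriv ?_
      field_simp
    have h2 : HasDerivAt
        (fun t : ℝ => ∑ g ∈ 𝒢.filter (fun g => (j,k) ∈ g), lamg g * vg g * Real.sqrt (t^2 + c g))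
        (∑ g ∈ 𝒢.filter (fun g => (j,k) ∈ g), lamg g * vg g * (t₀ / Real.sqrt (t₀^2 + c g))) t₀ := by
      apply HasDerivAt.fun_sum
      intro g hg
      have hpos := hcpos g hg
      have hs : HasDerivAt (fun t : ℝ => t^2 + c g) (2*t₀) t₀ := by
        have := (hasDerivAt_pow 2 t₀).add_const (c g)
        simpa using this
      have hsq := (Real.hasDerivAt_sqrt (ne_of_gt hpos)).comp t₀ hs
      have := hsq.const_mul (lamg g * vg g)
      refine this.congr_deriv ?_
      have hsqrtpos : 0 < Real.sqrt (t₀^2 + c g) := Real.sqrt_pos.mpr hpos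
      field_simp
    have := h1.add h2
    refine this.congr_deriv ?_
    rw [hSgdef, Finset.mul_sum]
    congr 1
    apply Finset.sum_congr rfl
    intro g hg
    ring
  obtain ⟨hcase_ne, hcase_eq⟩ := oneDim_min h _ lam t₀ hd hlamnn hGmin
  -- replace the denominator in the goal
  have hden : ∑ g ∈ 𝒢.filter (fun g => (j,k) ∈ g),
      lamg g * vg g / Real.sqrt (∑ jk ∈ g, (Bhat jk.1 jk.2)^2) = Sg := by
    rw [hSgdef]
    apply Finset.sum_congr rfl
    intro g hg
    rw [hBhatg g hg]
  rw [hden]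
  have ha : 0 < a := by
    rw [Function.ne_iff] at hx
    obtain ⟨i, hi⟩ := hx
    rw [hadef]
    apply Finset.sum_pos' (fun i _ => sq_nonneg _)
    refine ⟨i, Finset.mem_univ i, ?_⟩
    have hi' : X i j ≠ 0 := hi
    exact lt_of_le_of_ne (sq_nonneg _) (Ne.symm (pow_ne_zero 2 hi'))
  have hSgnn : 0 ≤ Sg := by
    rw [hSgdef]
    apply Finset.sum_nonneg
    intro g hg
    have hgG : g ∈ 𝒢 := (Finset.mem_filter.mp hg).1
    have := hcpos g hg
    apply div_nonneg (mul_nonneg (hlamg g hgG) (hvg g hgG)) (Real.sqrt_nonneg _)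
  have hD : 0 < a + (n:ℝ) * Sg := by nlinarith [mul_nonneg (le_of_lt hn') hSgnn]
  have hlam' : (n:ℝ) * lam1 * w j = (n:ℝ) * lam := by rw [hlamdef]; ring
  rw [hlam']
  clear_value t₀ a b Sg lam
  rcases eq_or_ne t₀ 0 with ht0 | ht0
  · -- zero case
    have habs := hcase_eq ht0
    rw [ht0] at habs ⊢
    rw [show (a*(0:ℝ) - b)/(n:ℝ) + 0*Sg = -(b/(n:ℝ)) by ring] at habs
    rw [abs_neg, abs_div, abs_of_pos hn', div_le_iff₀ hn'] at habs
    have hmax : max (|b| - (n:ℝ) * lam) 0 = 0 := by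
      apply max_eq_right
      nlinarith [habs]
    rw [hmax, mul_zero, zero_div]
  · -- nonzero case
    have heq := hcase_ne ht0
    have hbeq : b = t₀ * (a + (n:ℝ) * Sg) + (n:ℝ) * lam * Real.sign t₀ := by
      have h3 : (n:ℝ) * ((a*t₀-b)/(n:ℝ) + t₀*Sg + lam*Real.sign t₀) = (n:ℝ) * 0 := by rw [heq]
      rw [mul_zero, mul_add, mul_add, mul_div_cancel₀ _ hnne] at h3
      nlinarith [h3]
    rcases ht0.lt_or_gt with hneg | hpos
    · -- t₀ < 0
      have hsign : Real.sign t₀ = -1 := Real.sign_of_neg hneg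
      rw [hsign] at hbeq
      have hmul : t₀ * (a + (n:ℝ) * Sg) < 0 := mul_neg_of_neg_of_pos hneg hD
      have hnl : 0 ≤ (n:ℝ) * lam := mul_nonneg (le_of_lt hn') hlamnn
      have hbneg : b < 0 := by nlinarith
      have hsb : Real.sign b = -1 := Real.sign_of_neg hbneg
      have habsb : |b| = -b := abs_of_neg hbneg
      have hmax : max (|b| - (n:ℝ) * lam) 0 = |b| - (n:ℝ) * lam := by
        apply max_eq_left
        rw [habsb]
        nlinarith
      rw [hsb, hmax, habsb, hbeq]
      field_simp
      ring
    · -- t₀ > 0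
      have hsign : Real.sign t₀ = 1 := Real.sign_of_pos hpos
      rw [hsign] at hbeq
      have hmul : 0 < t₀ * (a + (n:ℝ) * Sg) := mul_pos hpos hD
      have hnl : 0 ≤ (n:ℝ) * lam := mul_nonneg (le_of_lt hn') hlamnn
      have hbpos : 0 < b := by nlinarith
      have hsb : Real.sign b = 1 := Real.sign_of_pos hbpos
      have habsb : |b| = b := abs_of_pos hbpos
      have hmax : max (|b| - (n:ℝ) * lam) 0 = |b| - (n:ℝ) * lam := by
        apply max_eq_left
        rw [habsb]
        nlinarith
      rw [hsb, hmax, habsb, hbeq, one_mul]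
      field_simp
      ring
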